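/- Let C be a family of sets and κ an infinite cardinal. C is additively <κ-Noetherian if and only if it is NOT possible to choose, for every ordinal α < κ, a set C_α ∈ C and a point x_α such that for all β < α < κ, the point x_α lies in C_α but not in C_β. -/

import Mathlib

universe u

/-- A family of sets is `<κ`-Noetherian if every subfamily well-ordered by
strict inclusion has cardinality `< κ`. -/
def IsLtNoetherian {X : Type u} (C : Set (Set X)) (κ : Cardinal.{u}) : Prop :=
  ∀ D : Set (Set X), D ⊆ C →
    IsWellOrder D (fun A B => (A : Set X) ⊂ (B : Set X)) → Cardinal.mk D < κ

/-- A family is additively `<κ`-Noetherian if the collection of all unions of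
its subfamilies is `<κ`-Noetherian. -/
def IsAddLtNoetherian {X : Type u} (C : Set (Set X)) (κ : Cardinal.{u}) : Prop :=
  IsLtNoetherian {U : Set X | ∃ S : Set (Set X), S ⊆ C ∧ U = ⋃₀ S} κ

theorem stmt1 {X : Type u} (C : Set (Set X)) (κ : Cardinal.{u})
    (hκ : Cardinal.aleph0 ≤ κ) :
    IsAddLtNoetherian C κ ↔
      ¬ ∃ (A : Ordinal.{u} → Set X) (x : Ordinal.{u} → X),
        ∀ α < κ.ord, A α ∈ C ∧ x α ∈ A α ∧ ∀ β < α, x α ∉ A β := by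
  constructor
  · rintro h ⟨A, x, hx⟩
    -- build a strictly increasing chain of unions
    set U : Ordinal.{u} → Set X := fun α => ⋃ β ∈ Set.Iic α, A β with hU
    have hmono : ∀ {β α : Ordinal.{u}}, β ≤ α → U β ⊆ U α := by
      intro β α hba
      exact Set.biUnion_subset_biUnion_left (fun γ hγ => le_trans hγ hba)
    have hstrict : ∀ {β α : Ordinal.{u}}, β < α → α < κ.ord → U β ⊂ U α := by
      intro β α hba hα
      refine ⟨hmono hba.le, fun hsub => ?_⟩
      have hmem : x α ∈ U α := Set.mem_biUnion (le_refl α) (hx α hα).2.1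
      have hnot : x α ∉ U β := by
        simp only [hU, Set.mem_iUnion, not_exists, Set.mem_Iic]
        intro γ hγ
        exact fun hm => (hx α hα).2.2 γ (lt_of_le_of_lt hγ hba) hm
      exact hnot (hsub hmem)
    set D : Set (Set X) := U '' Set.Iio κ.ord with hDdef
    have hD : D ⊆ {V : Set X | ∃ S : Set (Set X), S ⊆ C ∧ V = ⋃₀ S} := by
      rintro _ ⟨α, hα, rfl⟩
      refine ⟨A '' Set.Iic α, ?_, ?_⟩
      · rintro _ ⟨β, hβ, rfl⟩
        exact (hx β (lt_of_le_of_lt hβ hα)).1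
      · rw [Set.sUnion_image]
    -- index function
    have hidx : ∀ s : D, ∃ α, α < κ.ord ∧ U α = (s : Set X) := fun s => s.2
    let f : D → Ordinal.{u} := fun s => (hidx s).choose
    have hf1 : ∀ s : D, f s < κ.ord := fun s => (hidx s).choose_spec.1
    have hf2 : ∀ s : D, U (f s) = (s : Set X) := fun s => (hidx s).choose_spec.2
    have hrefl : ∀ {s t : D}, (s : Set X) ⊂ (t : Set X) → f s < f t := by
      intro s t hst
      rcases lt_trichotomy (f s) (f t) with hlt | heq | hgt
      · exact hlt
      · exact absurd (show (s : Set X) = (t : Set X) by rw [← hf2 s, heq, hf2 t]) hst.ne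
      · exfalso
        have h2 := hstrict hgt (hf1 s)
        rw [hf2 s, hf2 t] at h2
        exact hst.2 h2.1
    haveI htri : IsTrichotomous D (fun A B => (A : Set X) ⊂ (B : Set X)) := by
      constructor
      intro s t
      rcases lt_trichotomy (f s) (f t) with hlt | heq | hgt
      · intro hn _; refine absurd ?_ hn
        have h2 := hstrict hlt (hf1 t)
        rwa [hf2 s, hf2 t] at h2
      · intro _ _
        exact Subtype.ext (by rw [← hf2 s, heq, hf2 t])
      · intro _ hn; refine absurd ?_ hn
        have h2 := hstrict hgt (hf1 s)
        rwa [hf2 s, hf2 t] at h2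
    haveI htr : IsTrans D (fun A B => (A : Set X) ⊂ (B : Set X)) :=
      ⟨fun _ _ _ h1 h2 => h1.trans h2⟩
    haveI hwf : IsWellFounded D (fun A B => (A : Set X) ⊂ (B : Set X)) :=
      ⟨Subrelation.wf (fun h => hrefl h) (InvImage.wf f Ordinal.lt_wf)⟩
    have hcard := h D hD {}
    -- but `D` has cardinality at least `κ`
    haveI : IsWellOrder κ.ord.ToType (· < ·) := isWellOrder_lt
    have hge : κ ≤ Cardinal.mk D := by
      rw [← Cardinal.card_ord κ, ← Cardinal.mk_toType]
      have hlt : ∀ t : κ.ord.ToType,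
          Ordinal.typein (α := κ.ord.ToType) (· < ·) t < κ.ord :=
        fun t => Ordinal.typein_lt_self t
      refine Cardinal.mk_le_of_injective (f := fun t =>
        (⟨U (Ordinal.typein (α := κ.ord.ToType) (· < ·) t),
          ⟨Ordinal.typein (α := κ.ord.ToType) (· < ·) t, hlt t, rfl⟩⟩ : D)) ?_
      intro a b hab
      have he : U (Ordinal.typein (α := κ.ord.ToType) (· < ·) a)
          = U (Ordinal.typein (α := κ.ord.ToType) (· < ·) b) :=
        congrArg Subtype.val hab
      have hv : Ordinal.typein (α := κ.ord.ToType) (· < ·) a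
          = Ordinal.typein (α := κ.ord.ToType) (· < ·) b := by
        rcases lt_trichotomy (Ordinal.typein (α := κ.ord.ToType) (· < ·) a)
            (Ordinal.typein (α := κ.ord.ToType) (· < ·) b) with hlt' | heq | hgt
        · exact absurd he.ge (hstrict hlt' (hlt b)).2
        · exact heq
        · exact absurd he.le (hstrict hgt (hlt a)).2
      exact (Ordinal.typein (α := κ.ord.ToType) (· < ·)).injective hv
    exact absurd hcard (not_lt.mpr hge)
  · intro h D hD hwo
    by_contra hge
    push_neg at hge
    apply h
    haveI := hwo
    have htype : κ.ord ≤ Ordinal.type (fun A B : D => (A : Set X) ⊂ (B : Set X)) := by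
      rw [Cardinal.ord_le, Ordinal.card_type]
      exact hge
    have hlim := Cardinal.isSuccLimit_ord hκ
    -- the enumeration of `D`
    let e : ∀ α : Ordinal.{u}, α < κ.ord → D := fun α hα =>
      Ordinal.enum (fun A B : D => (A : Set X) ⊂ (B : Set X)) ⟨α, lt_of_lt_of_le hα htype⟩
    have hemono : ∀ {β α : Ordinal.{u}} (hβ : β < κ.ord) (hα : α < κ.ord), β < α →
        ((e β hβ : D) : Set X) ⊂ ((e α hα : D) : Set X) := by
      intro β α hβ hα hba
      exact Ordinal.enum_lt_enum (r := fun A B : D => (A : Set X) ⊂ (B : Set X)) |>.mpr (Subtype.mk_lt_mk.mpr hba)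
    have hemono' : ∀ {β α : Ordinal.{u}} (hβ : β < κ.ord) (hα : α < κ.ord), β ≤ α →
        ((e β hβ : D) : Set X) ⊆ ((e α hα : D) : Set X) := by
      intro β α hβ hα hba
      rcases lt_or_eq_of_le hba with hlt | rfl
      · exact (hemono hβ hα hlt).1
      · rfl
    have hsucc : ∀ {α : Ordinal.{u}}, α < κ.ord → α + 1 < κ.ord := by
      intro α hα
      rw [Ordinal.add_one_eq_succ]
      exact hlim.succ_lt hα
    have claim : ∀ (α : Ordinal.{u}) (hα : α < κ.ord),
        ∃ (B : Set X) (p : X), B ∈ C ∧ p ∈ B ∧ p ∉ ((e α hα : D) : Set X) ∧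
          B ⊆ ((e (α + 1) (hsucc hα) : D) : Set X) := by
      intro α hα
      have hss := hemono hα (hsucc hα) (Order.lt_succ α)
      obtain ⟨p, hp1, hp2⟩ := Set.exists_of_ssubset hss
      obtain ⟨S, hSC, hSU⟩ := hD (e (α + 1) (hsucc hα)).2
      rw [hSU] at hp1
      obtain ⟨B, hBS, hpB⟩ := hp1
      exact ⟨B, p, hSC hBS, hpB, hp2, by rw [hSU]; exact Set.subset_sUnion_of_mem hBS⟩
    have hX : Nonempty X := ⟨(claim 0 hlim.pos).choose_spec.choose⟩
    refine ⟨fun α => if hα : α < κ.ord then (claim α hα).choose else ∅,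
      fun α => if hα : α < κ.ord then (claim α hα).choose_spec.choose
        else Classical.arbitrary X, ?_⟩
    intro α hα
    obtain ⟨h1, h2, h3, h4⟩ := (claim α hα).choose_spec.choose_spec
    refine ⟨by simp only [dif_pos hα]; exact h1, by simp only [dif_pos hα]; exact h2, ?_⟩
    intro β hβα
    have hβ : β < κ.ord := hβα.trans hα
    simp only [dif_pos hβ, dif_pos hα]
    obtain ⟨g1, g2, g3, g4⟩ := (claim β hβ).choose_spec.choose_spec
    intro hmem
    have hsub : ((e (β + 1) (hsucc hβ) : D) : Set X) ⊆ ((e α hα : D) : Set X) :=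
      hemono' (hsucc hβ) hα (by rwa [Ordinal.add_one_eq_succ, Order.succ_le_iff])
    exact h3 (hsub (g4 hmem))
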